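/- Let p = 14/15, ρ = diag(p, 1−p) ∈ M_2, σ_y = [[0,−i],[i,0]], and K = (1/2)·[[3p−1, 2],[2, 3p+2]] ∈ M_2 (which is positive definite), with positive square root K^{1/2}. The linear map T(X) := K^{1/2} X K^{1/2} restricted to S = span{ρ, σ_y} is completely positive and trace-preserving on S (i.e., tr[T(X)] = tr[X] for all X ∈ S); yet there is no positive trace-preserving linear map T̃ : M_2 → M_2 with T̃(ρ) = K^{1/2} ρ K^{1/2} and T̃(σ_y) = K^{1/2} σ_y K^{1/2}. -/

import Mathlib

open scoped Kronecker ComplexOrder Matrix.Norms.L2Operator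
open Matrix Filter Classical

/-- `M_d`, the algebra of `d × d` complex matrices. -/
abbrev Mat (d : ℕ) := Matrix (Fin d) (Fin d) ℂ

/-- A linear map `T : S → M_{d'}` on a subspace `S ⊆ M_d` is completely positive if for
every `n` and every positive semidefinite `P = Σ_j X_j ⊗ K_j` with `X_j ∈ S`, `K_j ∈ M_n`,
the matrix `(T ⊗ id_n)(P) = Σ_j T(X_j) ⊗ K_j` is positive semidefinite. -/
def IsCPOn {d d' : ℕ} (S : Submodule ℂ (Mat d)) (T : S →ₗ[ℂ] Mat d') : Prop :=
  ∀ (n m : ℕ) (X : Fin m → S) (K : Fin m → Matrix (Fin n) (Fin n) ℂ),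
    (∑ j, (X j : Mat d) ⊗ₖ K j).PosSemidef →
    (∑ j, (T (X j)) ⊗ₖ K j).PosSemidef

/-- Complete positivity for a linear map defined on all of `M_d`. -/
def IsCP {d d' : ℕ} (T : Mat d →ₗ[ℂ] Mat d') : Prop :=
  ∀ (n m : ℕ) (X : Fin m → Mat d) (K : Fin m → Matrix (Fin n) (Fin n) ℂ),
    (∑ j, X j ⊗ₖ K j).PosSemidef →
    (∑ j, T (X j) ⊗ₖ K j).PosSemidef

/-- The positive semidefinite square root of a positive semidefinite matrix
(junk value `0` on other matrices). -/
noncomputable def msqrt {n : ℕ} (A : Matrix (Fin n) (Fin n) ℂ) : Matrix (Fin n) (Fin n) ℂ :=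
  if h : A.PosSemidef then
    h.1.eigenvectorUnitary.1 * diagonal ((↑) ∘ (Real.sqrt ·) ∘ h.1.eigenvalues) *
      (star h.1.eigenvectorUnitary : Matrix (Fin n) (Fin n) ℂ)
  else 0

def matPsi0 : Mat 2 := !![1, 0; 0, 0]
def pauliX : Mat 2 := !![0, 1; 1, 0]
def pauliY : Mat 2 := !![0, -Complex.I; Complex.I, 0]
def pauliZ : Mat 2 := !![1, 0; 0, -1]

noncomputable def rho11 : Mat 2 := !![14/15, 0; 0, 1 - 14/15]

noncomputable def K11 : Mat 2 := (1/2 : ℂ) • !![3*(14/15) - 1, 2; 2, 3*(14/15) + 2]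

/-! ### Auxiliary lemmas -/

open scoped MatrixOrder in
lemma msqrt_eq_sqrt {n : ℕ} (A : Matrix (Fin n) (Fin n) ℂ) (hA : A.PosSemidef) :
    msqrt A = CFC.sqrt A := by
  rw [msqrt, dif_pos hA, CFC.sqrt_eq_cfc, cfc_nnreal_eq_real _ A hA.nonneg, hA.1.cfc_eq]
  simp only [IsHermitian.cfc, Unitary.conjStarAlgAut_apply, Real.coe_sqrt, Real.coe_toNNReal']
  congr 3
  funext i
  simp [max_eq_left (hA.eigenvalues_nonneg i)]

lemma K11_eq : K11 = !![9/10, 1; 1, 12/5] := by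
  ext i j; fin_cases i <;> fin_cases j <;> simp [K11] <;> norm_num

lemma K11_posDef : K11.PosDef := by
  rw [K11_eq]
  refine Matrix.PosDef.of_dotProduct_mulVec_pos ?_ ?_
  · ext i j
    fin_cases i <;> fin_cases j <;>
      simp [Matrix.conjTranspose_apply, Complex.ext_iff]
  · intro x hx
    have key : star x ⬝ᵥ (!![9/10, 1; 1, 12/5] : Mat 2) *ᵥ x =
        (9/10 : ℂ) * (star (x 0) * x 0) + star (x 0) * x 1 + star (x 1) * x 0
          + (12/5 : ℂ) * (star (x 1) * x 1) := by
      simp [dotProduct, Matrix.mulVec, Fin.sum_univ_two]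
      ring
    have hne : Complex.normSq (x 0) + Complex.normSq (x 1) > 0 := by
      rcases eq_or_ne (x 0) 0 with h0 | h0
      · rcases eq_or_ne (x 1) 0 with h1 | h1
        · exact absurd (funext fun i => by fin_cases i <;> assumption) hx
        · have h := Complex.normSq_pos.mpr h1
          have := Complex.normSq_nonneg (x 0); linarith
      · have h := Complex.normSq_pos.mpr h0
        have := Complex.normSq_nonneg (x 1); linarith
    rw [key, Complex.lt_def]
    constructor
    · simp only [Complex.add_re, Complex.mul_re, Complex.mul_im, Complex.zero_re]
      simp only [Complex.star_def, Complex.conj_re, Complex.conj_im, Complex.normSq_apply] at *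
      norm_num
      nlinarith [sq_nonneg ((x 0).re + 2*(x 1).re), sq_nonneg ((x 0).im + 2*(x 1).im), hne]
    · simp only [Complex.add_im, Complex.mul_re, Complex.mul_im, Complex.zero_im]
      simp only [Complex.star_def, Complex.conj_re, Complex.conj_im]
      norm_num
      ring

open scoped MatrixOrder in
lemma msqrtK_psd : (msqrt K11).PosSemidef := by
  rw [msqrt_eq_sqrt K11 K11_posDef.posSemidef]
  exact (CFC.sqrt_nonneg _).posSemidef

open scoped MatrixOrder in
lemma msqrtK_sq : msqrt K11 * msqrt K11 = K11 := by
  rw [msqrt_eq_sqrt K11 K11_posDef.posSemidef]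
  exact CFC.sqrt_mul_sqrt_self _ K11_posDef.posSemidef.nonneg

lemma kron_conjT {a b : ℕ} (A : Mat a) (B : Matrix (Fin b) (Fin b) ℂ) :
    (A ⊗ₖ B)ᴴ = Aᴴ ⊗ₖ Bᴴ := by
  ext i j
  simp [Matrix.conjTranspose_apply, star_mul']

lemma K11_transpose : K11ᵀ = K11 := by
  rw [K11_eq]
  ext i j
  fin_cases i <;> fin_cases j <;> simp

open scoped MatrixOrder in
lemma msqrtK_transpose : (msqrt K11)ᵀ = msqrt K11 := by
  have h1 : ((msqrt K11)ᵀ).PosSemidef := msqrtK_psd.transpose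
  have h2 : ((msqrt K11)ᵀ) ^ 2 = K11 := by
    rw [pow_two, ← Matrix.transpose_mul, msqrtK_sq, K11_transpose]
  have h3 : (msqrt K11) ^ 2 = K11 := by rw [pow_two, msqrtK_sq]
  exact (CFC.sqrt_unique (a := K11) (by rw [← pow_two]; exact h2) h1.nonneg).symm.trans
    (CFC.sqrt_unique (by rw [← pow_two]; exact h3) msqrtK_psd.nonneg)

/-- `msqrt K11` is a real symmetric matrix. -/
lemma msqrtK_real : ∃ x y z : ℝ, msqrt K11 = !![(x:ℂ), z; z, y] := by
  set R := msqrt K11 with hRdef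
  have hH : Rᴴ = R := msqrtK_psd.1
  have hT : Rᵀ = R := msqrtK_transpose
  have h00 : star (R 0 0) = R 0 0 := by
    conv_rhs => rw [← hH]
    simp [Matrix.conjTranspose_apply]
  have h11 : star (R 1 1) = R 1 1 := by
    conv_rhs => rw [← hH]
    simp [Matrix.conjTranspose_apply]
  have h10 : R 1 0 = R 0 1 := by
    conv_lhs => rw [← hT]
    simp [Matrix.transpose_apply]
  have h01 : star (R 0 1) = R 0 1 := by
    have h : star (R 0 1) = R 1 0 := by
      conv_rhs => rw [← hH]
      simp [Matrix.conjTranspose_apply]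
    rw [h, h10]
  refine ⟨(R 0 0).re, (R 1 1).re, (R 0 1).re, ?_⟩
  have i00 : (R 0 0).im = 0 := by
    have := congrArg Complex.im h00; simp at this; linarith
  have i11 : (R 1 1).im = 0 := by
    have := congrArg Complex.im h11; simp at this; linarith
  have i01 : (R 0 1).im = 0 := by
    have := congrArg Complex.im h01; simp at this; linarith
  ext i j
  fin_cases i <;> fin_cases j <;>
    simp [Complex.ext_iff, i00, i11, i01, h10, Complex.ofReal_re, Complex.ofReal_im]

noncomputable def Pp : Mat 2 := (1/2 : ℂ) • !![1, -Complex.I; Complex.I, 1]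
noncomputable def Pm : Mat 2 := (1/2 : ℂ) • !![1, Complex.I; -Complex.I, 1]

lemma Pp_sub_Pm : Pp - Pm = pauliY := by
  ext i j
  fin_cases i <;> fin_cases j <;> simp [Pp, Pm, pauliY] <;> ring

lemma Pp_trace : Pp.trace = 1 := by
  simp [Pp, Matrix.trace_fin_two]
  norm_num

lemma Pm_trace : Pm.trace = 1 := by
  simp [Pm, Matrix.trace_fin_two]
  norm_num

lemma Pp_psd : Pp.PosSemidef := by
  refine Matrix.PosSemidef.of_dotProduct_mulVec_nonneg ?_ ?_
  · ext i j
    fin_cases i <;> fin_cases j <;> simp [Pp, Matrix.conjTranspose_apply, Complex.ext_iff]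
  · intro x
    have key : star x ⬝ᵥ Pp *ᵥ x =
        ((Complex.normSq (x 0 - Complex.I * x 1) / 2 : ℝ) : ℂ) := by
      simp [Pp, dotProduct, Matrix.mulVec, Fin.sum_univ_two, Complex.normSq_apply,
        Complex.ext_iff, Complex.star_def]
      constructor <;> ring
    rw [key, ← Complex.ofReal_zero, Complex.real_le_real]
    exact div_nonneg (Complex.normSq_nonneg _) (by norm_num)

lemma Pm_psd : Pm.PosSemidef := by
  refine Matrix.PosSemidef.of_dotProduct_mulVec_nonneg ?_ ?_
  · ext i j
    fin_cases i <;> fin_cases j <;> simp [Pm, Matrix.conjTranspose_apply, Complex.ext_iff]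
  · intro x
    have key : star x ⬝ᵥ Pm *ᵥ x =
        ((Complex.normSq (x 0 + Complex.I * x 1) / 2 : ℝ) : ℂ) := by
      simp [Pm, dotProduct, Matrix.mulVec, Fin.sum_univ_two, Complex.normSq_apply,
        Complex.ext_iff, Complex.star_def]
      constructor <;> ring
    rw [key, ← Complex.ofReal_zero, Complex.real_le_real]
    exact div_nonneg (Complex.normSq_nonneg _) (by norm_num)

lemma psd_trace_pauliY (Q : Mat 2) (hQ : Q.PosSemidef) :
    |((Q * pauliY).trace).re| ≤ (Q.trace).re := by
  have h1 := hQ.dotProduct_mulVec_nonneg ![1, Complex.I]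
  have h2 := hQ.dotProduct_mulVec_nonneg ![1, -Complex.I]
  rw [Complex.le_def] at h1 h2
  obtain ⟨h1r, -⟩ := h1
  obtain ⟨h2r, -⟩ := h2
  simp [dotProduct, Matrix.mulVec, Fin.sum_univ_two, Complex.star_def, Complex.add_re,
    Complex.mul_re, Complex.mul_im, Complex.conj_re, Complex.conj_im] at h1r h2r
  have ht : ((Q * pauliY).trace).re = -(Q 0 1).im + (Q 1 0).im := by
    simp [Matrix.trace_fin_two, Matrix.mul_apply, Fin.sum_univ_two, pauliY,
      Complex.add_re, Complex.mul_re]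
  have ht2 : (Q.trace).re = (Q 0 0).re + (Q 1 1).re := by
    simp [Matrix.trace_fin_two]
  rw [ht, ht2, abs_le]
  constructor <;> linarith

/-- The key lower bound: `tr(√K σ_y √K σ_y) > 2`. -/
lemma lower_bound : 2 < ((msqrt K11 * pauliY * msqrt K11 * pauliY).trace).re := by
  obtain ⟨x, y, z, hRe⟩ := msqrtK_real
  have hsq := msqrtK_sq
  rw [hRe, K11_eq] at hsq
  have E00 : x*x + z*z = 9/10 := by
    have h := congrFun (congrFun hsq 0) 0
    simp [Matrix.mul_apply, Fin.sum_univ_two] at h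
    rw [(by norm_num : (9/10 : ℂ) = ((9/10 : ℝ) : ℂ))] at h
    exact_mod_cast h
  have E01 : x*z + z*y = 1 := by
    have h := congrFun (congrFun hsq 0) 1
    simp [Matrix.mul_apply, Fin.sum_univ_two] at h
    rw [(by norm_num : (1 : ℂ) = ((1 : ℝ) : ℂ))] at h
    exact_mod_cast h
  have E11 : z*z + y*y = 12/5 := by
    have h := congrFun (congrFun hsq 1) 1
    simp [Matrix.mul_apply, Fin.sum_univ_two] at h
    rw [(by norm_num : (12/5 : ℂ) = ((12/5 : ℝ) : ℂ))] at h
    exact_mod_cast h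
  have hpsd : (!![(x:ℂ), z; z, y]).PosSemidef := hRe ▸ msqrtK_psd
  have hx : 0 ≤ x := by
    have h := hpsd.dotProduct_mulVec_nonneg ![1, 0]
    have h' : (0:ℂ) ≤ ((x : ℝ) : ℂ) := by
      convert h using 1
      simp [dotProduct, Matrix.mulVec, Fin.sum_univ_two]
    exact_mod_cast h'
  have hy : 0 ≤ y := by
    have h := hpsd.dotProduct_mulVec_nonneg ![0, 1]
    have h' : (0:ℂ) ≤ ((y : ℝ) : ℂ) := by
      convert h using 1
      simp [dotProduct, Matrix.mulVec, Fin.sum_univ_two]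
    exact_mod_cast h'
  have hxD : 0 ≤ x*(x*y) - x*(z*z) := by
    have h := hpsd.dotProduct_mulVec_nonneg ![-(z:ℂ), (x:ℂ)]
    have h' : (0:ℂ) ≤ ((x*(x*y) - x*(z*z) : ℝ) : ℂ) := by
      convert h using 1
      simp [dotProduct, Matrix.mulVec, Fin.sum_univ_two, Complex.star_def]
      push_cast
      ring
    exact_mod_cast h'
  have hyD : 0 ≤ y*(x*y) - y*(z*z) := by
    have h := hpsd.dotProduct_mulVec_nonneg ![(y:ℂ), -(z:ℂ)]
    have h' : (0:ℂ) ≤ ((y*(x*y) - y*(z*z) : ℝ) : ℂ) := by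
      convert h using 1
      simp [dotProduct, Matrix.mulVec, Fin.sum_univ_two, Complex.star_def]
      push_cast
      ring
    exact_mod_cast h'
  have htr : (msqrt K11 * pauliY * msqrt K11 * pauliY).trace
      = ((2*(x*y - z*z) : ℝ) : ℂ) := by
    rw [hRe]
    simp [Matrix.trace_fin_two, Matrix.mul_apply, Fin.sum_univ_two, pauliY, Complex.ext_iff]
    first
    | (constructor <;> push_cast <;> ring)
    | (push_cast; ring)
    | ring
  rw [htr]
  rw [Complex.ofReal_re]
  -- now a real inequality: 2 < 2*(x*y - z*z)
  have hD2 : (x*y - z*z)^2 = 29/25 := by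
    have h : (x*y - z*z)^2 = (x*x + z*z)*(z*z + y*y) - (x*z + z*y)^2 := by ring
    rw [h, E00, E01, E11]; norm_num
  have hD : 1 < x*y - z*z := by
    rcases lt_or_ge (x*y - z*z) 0 with hneg | hpos
    · exfalso
      have hx0 : x = 0 := by nlinarith
      have hy0 : y = 0 := by nlinarith
      rw [hx0] at E00
      rw [hx0, hy0] at hD2
      nlinarith
    · nlinarith [mul_nonneg hpos hpos]
  linarith

/-- With `p = 14/15`, `ρ = diag(p, 1-p)` and `K` as in the paper: `K` is positive definite,
the map `X ↦ K^{1/2} X K^{1/2}` is completely positive and trace-preserving on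
`S = span{ρ, σ_y}`, yet it has no positive trace-preserving extension to `M_2`. -/
theorem stmt11
    (S : Submodule ℂ (Mat 2)) (hS : S = Submodule.span ℂ {rho11, pauliY})
    (T : S →ₗ[ℂ] Mat 2)
    (hT : ∀ X (hX : X ∈ S), T ⟨X, hX⟩ = msqrt K11 * X * msqrt K11) :
    K11.PosDef ∧
    IsCPOn S T ∧
    (∀ X ∈ S, (msqrt K11 * X * msqrt K11).trace = X.trace) ∧
    ¬ ∃ T' : Mat 2 →ₗ[ℂ] Mat 2,
        (∀ A : Mat 2, A.PosSemidef → (T' A).PosSemidef) ∧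
        (∀ X : Mat 2, (T' X).trace = X.trace) ∧
        T' rho11 = msqrt K11 * rho11 * msqrt K11 ∧
        T' pauliY = msqrt K11 * pauliY * msqrt K11 := by
  refine ⟨K11_posDef, ?_, ?_, ?_⟩
  · -- complete positivity
    intro n m X Kn hP
    have key : ∑ j, (T (X j)) ⊗ₖ Kn j =
        (msqrt K11 ⊗ₖ (1 : Matrix (Fin n) (Fin n) ℂ))ᴴ *
          (∑ j, ((X j : Mat 2)) ⊗ₖ Kn j) *
          (msqrt K11 ⊗ₖ (1 : Matrix (Fin n) (Fin n) ℂ)) := by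
      rw [Finset.mul_sum, Finset.sum_mul]
      refine Finset.sum_congr rfl fun j _ => ?_
      have hTX : T (X j) = msqrt K11 * (X j : Mat 2) * msqrt K11 := hT _ (X j).2
      rw [hTX, kron_conjT, Matrix.conjTranspose_one, msqrtK_psd.1.eq]
      rw [← Matrix.mul_kronecker_mul, ← Matrix.mul_kronecker_mul]
      rw [one_mul, mul_one]
    rw [key]
    exact hP.conjTranspose_mul_mul_same _
  · -- trace preservation
    intro X hX
    have hcyc : (msqrt K11 * X * msqrt K11).trace = (K11 * X).trace := by
      rw [Matrix.trace_mul_cycle, msqrtK_sq]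
    rw [hcyc]
    rw [hS] at hX
    refine Submodule.span_induction (p := fun Y _ => (K11 * Y).trace = Y.trace)
      ?_ ?_ ?_ ?_ hX
    · intro Y hY
      simp only [Set.mem_insert_iff, Set.mem_singleton_iff] at hY
      rcases hY with rfl | rfl
      · rw [K11_eq]
        simp only [rho11, Matrix.trace_fin_two, Matrix.mul_apply, Fin.sum_univ_two,
          Matrix.cons_val', Matrix.cons_val_zero, Matrix.cons_val_one, Matrix.head_cons,
          Matrix.empty_val', Matrix.cons_val_fin_one, Matrix.head_fin_const]
        norm_num
      · rw [K11_eq]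
        simp [pauliY, Matrix.trace_fin_two, Matrix.mul_apply, Fin.sum_univ_two]
        try ring
    · simp
    · intro Y Z hYm hZm hY hZ
      rw [Matrix.mul_add, Matrix.trace_add, hY, hZ, Matrix.trace_add]
    · intro a Y hYm hY
      rw [Matrix.mul_smul, Matrix.trace_smul, hY, Matrix.trace_smul]
  · -- no positive trace-preserving extension
    rintro ⟨T', hPos, hTr, -, hσ⟩
    have hsubT : T' pauliY = T' Pp - T' Pm := by
      rw [← map_sub, Pp_sub_Pm]
    have hQp : (T' Pp).PosSemidef := hPos _ Pp_psd
    have hQm : (T' Pm).PosSemidef := hPos _ Pm_psd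
    have htp : ((T' Pp).trace).re = 1 := by
      rw [hTr, Pp_trace]; simp
    have htm : ((T' Pm).trace).re = 1 := by
      rw [hTr, Pm_trace]; simp
    have bp := psd_trace_pauliY _ hQp
    have bm := psd_trace_pauliY _ hQm
    rw [htp] at bp
    rw [htm] at bm
    have hup : ((T' pauliY * pauliY).trace).re ≤ 2 := by
      rw [hsubT, Matrix.sub_mul, Matrix.trace_sub, Complex.sub_re]
      have h1 := (abs_le.mp bp).2
      have h2 := (abs_le.mp bm).1
      linarith
    have hlow : 2 < ((T' pauliY * pauliY).trace).re := by
      rw [hσ]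
      exact lower_bound
    linarith
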